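/- The Gegenbauer polynomial C_l^α(t) is identically zero if and only if l ≥ 1 and α ∈ {0, -1, -2, ..., -⌊(l-1)/2⌋}. -/

import Mathlib

open scoped BigOperators

/-- The Gegenbauer polynomial `C_l^α(t)`, with the quotient `Γ(l-k+α)/Γ(α)`
interpreted as the rising factorial `α(α+1)⋯(α+l-k-1)`. -/
noncomputable def gegenbauer (l : ℕ) (α : ℂ) : Polynomial ℂ :=
  ∑ k ∈ Finset.range (l / 2 + 1),
    Polynomial.C ((-1 : ℂ) ^ k *
        (∏ j ∈ Finset.range (l - k), (α + j)) /
        ((Nat.factorial (l - 2 * k) : ℂ) * (Nat.factorial k : ℂ)) *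
        2 ^ (l - 2 * k)) *
      Polynomial.X ^ (l - 2 * k)

/-- `C_l^α ≡ 0` iff `l ≥ 1` and `α ∈ {0, -1, …, -⌊(l-1)/2⌋}`. -/
theorem stmt5 (l : ℕ) (α : ℂ) :
    gegenbauer l α = 0 ↔ 1 ≤ l ∧ ∃ m : ℕ, m ≤ (l - 1) / 2 ∧ α = -(m : ℂ) := by
  constructor
  · intro h
    rcases Nat.eq_zero_or_pos l with rfl | hl
    · exfalso
      simp [gegenbauer] at h
    · refine ⟨hl, ?_⟩
      have hc := congrArg (fun p => Polynomial.coeff p (l % 2)) h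
      simp only [gegenbauer, Polynomial.finset_sum_coeff, Polynomial.coeff_C_mul,
        Polynomial.coeff_X_pow, Polynomial.coeff_zero, mul_ite, mul_one, mul_zero] at hc
      rw [Finset.sum_eq_single (l / 2)] at hc
      · rw [if_pos (by omega)] at hc
        have h1 : ((-1 : ℂ) ^ (l / 2)) ≠ 0 := pow_ne_zero _ (by norm_num)
        have h2 : ((Nat.factorial (l - 2 * (l / 2)) : ℂ) * (Nat.factorial (l / 2) : ℂ)) ≠ 0 :=
          mul_ne_zero (Nat.cast_ne_zero.mpr (Nat.factorial_ne_zero _))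
            (Nat.cast_ne_zero.mpr (Nat.factorial_ne_zero _))
        have h3 : ((2 : ℂ) ^ (l - 2 * (l / 2))) ≠ 0 := pow_ne_zero _ (by norm_num)
        have hp : (∏ j ∈ Finset.range (l - l / 2), (α + j)) = 0 := by
          rcases mul_eq_zero.mp hc with h' | h'
          · rcases div_eq_zero_iff.mp h' with h'' | h''
            · rcases mul_eq_zero.mp h'' with h3 | h3
              · exact absurd h3 h1
              · exact h3
            · exact absurd h'' h2
          · exact absurd h' h3
        obtain ⟨j, hj, hj0⟩ := Finset.prod_eq_zero_iff.mp hp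
        simp only [Finset.mem_range] at hj
        exact ⟨j, by omega, by linear_combination hj0⟩
      · intro k hk hne
        rw [if_neg]
        simp only [Finset.mem_range] at hk
        omega
      · intro hmem
        simp at hmem
  · rintro ⟨hl, m, hm, rfl⟩
    unfold gegenbauer
    apply Finset.sum_eq_zero
    intro k hk
    simp only [Finset.mem_range] at hk
    have hz : (∏ j ∈ Finset.range (l - k), (-(m : ℂ) + j)) = 0 :=
      Finset.prod_eq_zero (i := m) (Finset.mem_range.mpr (by omega)) (by simp)
    simp [hz]
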